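/- Let k be a field, let f ∈ k[X] be a univariate polynomial with d = deg f > 0 such that the characteristic of k does not divide d (this is automatic in characteristic 0), and let a ∈ k with a ≠ 0. Then the bivariate polynomial F(x,y) = f(x) − f(y) + a ∈ k[x,y] is absolutely irreducible, i.e. its image in K[x,y] is irreducible for K the algebraic closure of k (equivalently, it remains irreducible over every algebraic field extension of k). -/

import Mathlib

open MvPolynomial

namespace SubShiftAux

variable {K : Type*} [Field K]




-- degree additivity
lemma deg_add {σ : Type*} (a b : σ →₀ ℕ) : (a + b).degree = a.degree + b.degree := by
  simp [Finsupp.degree_eq_weight_one, map_add]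

-- L2 : top homogeneous component nonzero
lemma top_ne_zero {σ : Type*} {R : Type*} [CommSemiring R] (P : MvPolynomial σ R)
    (hP : P ≠ 0) : homogeneousComponent P.totalDegree P ≠ 0 := by
  have hs : P.support.Nonempty := support_nonempty.mpr hP
  obtain ⟨m, hm, heq⟩ := Finset.exists_mem_eq_sup P.support hs (fun m => m.sum fun _ e => e)
  intro h0
  have hdeg : m.degree = P.totalDegree := by
    rw [totalDegree, heq]
    simp [Finsupp.degree, Finsupp.sum]
    rfl
  have := coeff_homogeneousComponent (n := P.totalDegree) m (φ := P)
  rw [h0, if_pos hdeg] at this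
  exact (mem_support_iff.mp hm) (by simpa using this.symm)

-- L1 : top homogeneous component of a product
lemma top_mul {σ : Type*} {R : Type*} [CommSemiring R] (G H : MvPolynomial σ R) :
    homogeneousComponent (G.totalDegree + H.totalDegree) (G * H)
      = homogeneousComponent G.totalDegree G * homogeneousComponent H.totalDegree H := by
  classical
  ext m
  rw [coeff_homogeneousComponent, MvPolynomial.coeff_mul, MvPolynomial.coeff_mul]
  by_cases hm : m.degree = G.totalDegree + H.totalDegree
  · rw [if_pos hm]
    refine Finset.sum_congr rfl ?_
    rintro ⟨m1, m2⟩ hx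
    have hxy : m1 + m2 = m := Finset.HasAntidiagonal.mem_antidiagonal.mp hx
    have hdeg : m1.degree + m2.degree = G.totalDegree + H.totalDegree := by
      rw [← hm, ← hxy, deg_add]
    rw [coeff_homogeneousComponent, coeff_homogeneousComponent]
    by_cases h1 : m1.degree = G.totalDegree
    · have h2 : m2.degree = H.totalDegree := by omega
      rw [if_pos h1, if_pos h2]
    · rcases lt_or_gt_of_ne h1 with hlt | hgt
      · have h2 : H.totalDegree < m2.degree := by omega
        have : MvPolynomial.coeff m2 H = 0 :=
          coeff_eq_zero_of_totalDegree_lt (by exact h2)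
        simp [this, if_neg h1]
      · have : MvPolynomial.coeff m1 G = 0 :=
          coeff_eq_zero_of_totalDegree_lt (by exact hgt)
        simp [this, if_neg h1]
  · rw [if_neg hm]
    symm
    refine Finset.sum_eq_zero ?_
    rintro ⟨m1, m2⟩ hx
    have hxy : m1 + m2 = m := Finset.HasAntidiagonal.mem_antidiagonal.mp hx
    rw [coeff_homogeneousComponent, coeff_homogeneousComponent]
    by_cases h1 : m1.degree = G.totalDegree
    · by_cases h2 : m2.degree = H.totalDegree
      · exact absurd (by rw [← hxy, deg_add, h1, h2]) hm
      · rw [if_neg h2, mul_zero]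
    · rw [if_neg h1, zero_mul]



noncomputable def e (K : Type*) [Field K] : MvPolynomial (Fin 2) K →ₐ[K] Polynomial K :=
  MvPolynomial.aeval (fun _ => Polynomial.X)

-- L3
lemma e_homog {P : MvPolynomial (Fin 2) K} {n : ℕ} (hP : P.IsHomogeneous n) :
    ∃ b : K, e K P = Polynomial.C b * Polynomial.X ^ n := by
  classical
  refine ⟨∑ m ∈ P.support, MvPolynomial.coeff m P, ?_⟩
  rw [e, MvPolynomial.aeval_def, MvPolynomial.eval₂_eq]
  rw [map_sum, Finset.sum_mul]
  refine Finset.sum_congr rfl ?_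
  intro m hm
  have hdeg : m.degree = n := by
    have := hP (MvPolynomial.mem_support_iff.mp hm)
    rwa [Finsupp.degree_eq_weight_one]
  rw [Finset.prod_pow_eq_pow_sum]
  have : ∑ i ∈ m.support, m i = n := hdeg
  rw [this, Polynomial.algebraMap_eq]

-- key coefficient lemma
lemma coeff_e (P : MvPolynomial (Fin 2) K) (n : ℕ) :
    (e K P).coeff n = (e K (homogeneousComponent n P)).coeff n := by
  classical
  conv_lhs => rw [← sum_homogeneousComponent P]
  rw [map_sum, Polynomial.finset_sum_coeff]
  refine Finset.sum_eq_single n ?_ ?_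
  · intro i _ hi
    obtain ⟨b, hb⟩ := e_homog (homogeneousComponent_isHomogeneous i P)
    rw [hb]
    simp [Polynomial.coeff_X_pow, Ne.symm hi]
  · intro hn
    simp only [Finset.mem_range] at hn
    have hz : homogeneousComponent n P = 0 := homogeneousComponent_eq_zero n P (by omega)
    rw [hz]
    simp



noncomputable def ψ (K : Type*) [Field K] :
    MvPolynomial (Fin 2) K ≃ₐ[K] Polynomial (MvPolynomial (Fin 1) K) :=
  MvPolynomial.finSuccEquiv K 1

noncomputable def ι (K : Type*) [Field K] : MvPolynomial (Fin 1) K ≃ₐ[K] Polynomial K :=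
  (MvPolynomial.renameEquiv K ((Equiv.equivPUnit (Fin 1)) : Fin 1 ≃ PUnit.{1})).trans (MvPolynomial.pUnitAlgEquiv K)

lemma ψ_X0 : ψ K (X 0) = Polynomial.X := finSuccEquiv_X_zero

lemma ψ_X1 : ψ K (X 1) = Polynomial.C (X 0) := by
  have : (1 : Fin 2) = Fin.succ 0 := rfl
  rw [ψ, this, finSuccEquiv_X_succ]

lemma ι_X : ι K (X 0) = Polynomial.X := by
  simp [ι, MvPolynomial.pUnitAlgEquiv]

lemma eval_psi (P : MvPolynomial (Fin 2) K) :
    ι K (Polynomial.eval (X 0) (ψ K P)) = e K P := by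
  have h : ((ι K).toAlgHom.toRingHom.comp
      ((Polynomial.evalRingHom (X (0 : Fin 1))).comp (ψ K).toAlgHom.toRingHom))
      = (e K).toRingHom := by
    apply MvPolynomial.ringHom_ext
    · intro r
      simp [ψ, e, ι, MvPolynomial.pUnitAlgEquiv, MvPolynomial.algebraMap_eq,
        finSuccEquiv_apply, eval₂Hom_C, rename_C, eval₂_C]
    · intro i
      show ι K (Polynomial.eval (X 0) (ψ K (X i))) = e K (X i)
      fin_cases i
      · show ι K (Polynomial.eval (X 0) (ψ K (X 0))) = e K (X 0)
        rw [ψ_X0]; simp [e, ι_X]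
      · show ι K (Polynomial.eval (X 0) (ψ K (X 1))) = e K (X 1)
        rw [ψ_X1]; simp [e, ι_X]
  calc ι K (Polynomial.eval (X 0) (ψ K P))
      = ((ι K).toAlgHom.toRingHom.comp
        ((Polynomial.evalRingHom (X (0 : Fin 1))).comp (ψ K).toAlgHom.toRingHom)) P := rfl
    _ = e K P := by rw [h]; rfl

-- L4
lemma diag_dvd (P : MvPolynomial (Fin 2) K) (hP : e K P = 0) :
    (X 0 - X 1 : MvPolynomial (Fin 2) K) ∣ P := by
  have hroot : Polynomial.eval (X 0) (ψ K P) = 0 := by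
    have := eval_psi P
    rw [hP] at this
    exact (map_eq_zero_iff _ (ι K).injective).mp this
  have hdvd : (Polynomial.X - Polynomial.C (X 0)) ∣ ψ K P :=
    Polynomial.dvd_iff_isRoot.mpr hroot
  have hXY : ψ K (X 0 - X 1 : MvPolynomial (Fin 2) K)
      = Polynomial.X - Polynomial.C (X 0) := by
    rw [map_sub, ψ_X0, ψ_X1]
  have := map_dvd (ψ K).symm hdvd
  rwa [← hXY, AlgEquiv.symm_apply_apply, AlgEquiv.symm_apply_apply] at this



-- L5: top component of aeval (X i) f
lemma comp_aeval (f : Polynomial K) (i : Fin 2) :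
    homogeneousComponent f.natDegree (Polynomial.aeval (X i : MvPolynomial (Fin 2) K) f)
      = C f.leadingCoeff * X i ^ f.natDegree := by
  classical
  rw [Polynomial.aeval_eq_sum_range, map_sum]
  have hterm : ∀ j ∈ Finset.range (f.natDegree + 1),
      homogeneousComponent f.natDegree (f.coeff j • (X i : MvPolynomial (Fin 2) K) ^ j)
        = if j = f.natDegree then f.coeff j • (X i : MvPolynomial (Fin 2) K) ^ j else 0 := by
    intro j _
    rw [map_smul]
    have hmem : (X i : MvPolynomial (Fin 2) K) ^ j ∈ homogeneousSubmodule (Fin 2) K j := by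
      rw [mem_homogeneousSubmodule]
      simpa using (isHomogeneous_X K i).pow j
    rw [homogeneousComponent_of_mem hmem]
    by_cases h : j = f.natDegree
    · simp [h]
    · simp [h, Ne.symm h]
  rw [Finset.sum_congr rfl hterm, Finset.sum_ite_eq' (Finset.range (f.natDegree + 1))]
  rw [if_pos (Finset.self_mem_range_succ _), smul_eq_C_mul]
  rfl

lemma totdeg_aeval_le (f : Polynomial K) (i : Fin 2) :
    (Polynomial.aeval (X i : MvPolynomial (Fin 2) K) f).totalDegree ≤ f.natDegree := by
  rw [Polynomial.aeval_eq_sum_range]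
  refine le_trans (totalDegree_finset_sum _ _) ?_
  refine Finset.sup_le ?_
  intro j hj
  refine le_trans (totalDegree_smul_le _ _) ?_
  rw [totalDegree_X_pow]
  simp only [Finset.mem_range] at hj
  omega



theorem core (f : Polynomial K) (hd : 0 < f.natDegree)
    (hchar : ¬ (ringChar K ∣ f.natDegree)) (a : K) (ha : a ≠ 0) :
    Irreducible (Polynomial.aeval (X 0 : MvPolynomial (Fin 2) K) f
      - Polynomial.aeval (X 1 : MvPolynomial (Fin 2) K) f + C a) := by
  classical
  set d := f.natDegree with hd_def
  set c := f.leadingCoeff with hc_def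
  have hf0 : f ≠ 0 := fun h => by simp [hd_def, h] at hd
  have hc : c ≠ 0 := Polynomial.leadingCoeff_ne_zero.mpr hf0
  set F := Polynomial.aeval (X 0 : MvPolynomial (Fin 2) K) f
      - Polynomial.aeval (X 1 : MvPolynomial (Fin 2) K) f + C a with hF
  have hTF : homogeneousComponent d F = C c * X 0 ^ d - C c * X 1 ^ d := by
    rw [hF, map_add, map_sub, comp_aeval, comp_aeval]
    have : homogeneousComponent d (C a : MvPolynomial (Fin 2) K) = 0 :=
      homogeneousComponent_eq_zero d (C a) (by rw [totalDegree_C]; omega)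
    rw [this, add_zero]
  have hTFne : homogeneousComponent d F ≠ 0 := by
    rw [hTF]
    intro h
    have h2 := congrArg (coeff (Finsupp.single (0 : Fin 2) d)) h
    rw [C_mul_X_pow_eq_monomial, C_mul_X_pow_eq_monomial] at h2
    have hne : Finsupp.single (1 : Fin 2) d ≠ Finsupp.single (0 : Fin 2) d := by
      intro hcon
      have := DFunLike.congr_fun hcon (1 : Fin 2)
      simp [Finsupp.single_apply] at this
      omega
    rw [coeff_sub, coeff_monomial, coeff_monomial, if_pos rfl, if_neg hne, coeff_zero] at h2
    simp at h2
    exact hc h2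
  have hFle : F.totalDegree ≤ d := by
    rw [hF]
    refine le_trans (totalDegree_add _ _) (max_le ?_ (by rw [totalDegree_C]; omega))
    rw [sub_eq_add_neg]
    refine le_trans (totalDegree_add _ _) (max_le (totdeg_aeval_le f 0) ?_)
    rw [totalDegree_neg]
    exact totdeg_aeval_le f 1
  have hFdeg : F.totalDegree = d :=
    le_antisymm hFle (le_of_not_gt fun h => hTFne (homogeneousComponent_eq_zero d F h))
  have hFne : F ≠ 0 := fun h => hTFne (by rw [h, map_zero])
  have heF : e K F = Polynomial.C a := by
    rw [hF, map_add, map_sub, ← Polynomial.aeval_algHom_apply, ← Polynomial.aeval_algHom_apply]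
    have h0 : e K (X 0 : MvPolynomial (Fin 2) K) = Polynomial.X := aeval_X _ _
    have h1 : e K (X 1 : MvPolynomial (Fin 2) K) = Polynomial.X := aeval_X _ _
    have h2 : e K (C a : MvPolynomial (Fin 2) K) = Polynomial.C a := by
      rw [e, aeval_C, Polynomial.algebraMap_eq]
    rw [h0, h1, h2, Polynomial.aeval_X_left_apply, sub_self, zero_add]
  have key : ∀ G H : MvPolynomial (Fin 2) K, F = G * H →
      1 ≤ G.totalDegree → 1 ≤ H.totalDegree → False := by
    intro G H hGH hp hq
    have hGne : G ≠ 0 := fun h => hFne (by rw [hGH, h, zero_mul])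
    have hHne : H ≠ 0 := fun h => hFne (by rw [hGH, h, mul_zero])
    have htop : homogeneousComponent (G.totalDegree + H.totalDegree) F
        = homogeneousComponent G.totalDegree G * homogeneousComponent H.totalDegree H := by
      rw [hGH]; exact top_mul G H
    have htopne : homogeneousComponent (G.totalDegree + H.totalDegree) F ≠ 0 := by
      rw [htop]
      exact mul_ne_zero (top_ne_zero G hGne) (top_ne_zero H hHne)
    have hsum_le : G.totalDegree + H.totalDegree ≤ d := by
      by_contra h
      exact htopne (homogeneousComponent_eq_zero _ F (by omega))
    have hsum_ge : d ≤ G.totalDegree + H.totalDegree := by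
      rw [← hFdeg, hGH]
      exact totalDegree_mul G H
    have hsum : G.totalDegree + H.totalDegree = d := le_antisymm hsum_le hsum_ge
    have hunit : IsUnit (e K G * e K H) := by
      rw [← map_mul, ← hGH, heF]
      exact Polynomial.isUnit_C.mpr (Ne.isUnit ha)
    have eTzero : ∀ P : MvPolynomial (Fin 2) K, 1 ≤ P.totalDegree → IsUnit (e K P) →
        e K (homogeneousComponent P.totalDegree P) = 0 := by
      intro P h1 hu
      obtain ⟨b, hb⟩ := e_homog (homogeneousComponent_isHomogeneous P.totalDegree P)
      obtain ⟨u, -, hu2⟩ := Polynomial.isUnit_iff.mp hu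
      have hco : (e K P).coeff P.totalDegree = 0 := by
        rw [← hu2, Polynomial.coeff_C, if_neg (by omega)]
      rw [coeff_e, hb] at hco
      simp only [Polynomial.coeff_C_mul, Polynomial.coeff_X_pow, if_true, mul_one] at hco
      rw [hb, hco]
      simp
    have d1 : (X 0 - X 1 : MvPolynomial (Fin 2) K) ∣ homogeneousComponent G.totalDegree G :=
      diag_dvd _ (eTzero G hp (isUnit_of_mul_isUnit_left hunit))
    have d2 : (X 0 - X 1 : MvPolynomial (Fin 2) K) ∣ homogeneousComponent H.totalDegree H :=
      diag_dvd _ (eTzero H hq (isUnit_of_mul_isUnit_right hunit))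
    have dd : (X 0 - X 1 : MvPolynomial (Fin 2) K) ^ 2 ∣ C c * (X 0 ^ d - X 1 ^ d) := by
      have heq : C c * (X 0 ^ d - X 1 ^ d : MvPolynomial (Fin 2) K)
          = homogeneousComponent G.totalDegree G * homogeneousComponent H.totalDegree H := by
        rw [mul_sub, ← hTF, ← hsum, htop]
      rw [heq, sq]
      exact mul_dvd_mul d1 d2
    have dd2 : (X 0 - X 1 : MvPolynomial (Fin 2) K) ^ 2 ∣ (X 0 ^ d - X 1 ^ d) := by
      have h2 := dd.mul_left (C c⁻¹)
      rwa [← mul_assoc, ← C_mul, inv_mul_cancel₀ hc, C_1, one_mul] at h2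
    have dd3 : (Polynomial.X - Polynomial.C (X 0 : MvPolynomial (Fin 1) K)) ^ 2 ∣
        (Polynomial.X ^ d - Polynomial.C ((X 0 : MvPolynomial (Fin 1) K) ^ d)) := by
      have h3 := map_dvd (ψ K) dd2
      rw [map_pow, map_sub, map_sub, map_pow, map_pow, ψ_X0, ψ_X1, ← Polynomial.C_pow] at h3
      exact h3
    obtain ⟨Q, hQ⟩ := dd3
    have hder := congrArg
      (fun p => Polynomial.eval (X 0 : MvPolynomial (Fin 1) K) (Polynomial.derivative p)) hQ
    simp only [map_sub, Polynomial.derivative_X_pow, Polynomial.derivative_C, sub_zero,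
      Polynomial.derivative_mul, Polynomial.derivative_pow, Polynomial.derivative_sub,
      Polynomial.derivative_X, Polynomial.eval_mul, Polynomial.eval_add, Polynomial.eval_sub,
      Polynomial.eval_pow, Polynomial.eval_X, Polynomial.eval_C, Polynomial.eval_natCast,
      sub_self, mul_one, Polynomial.eval_one] at hder
    norm_num at hder
    have hdK : (d : K) ≠ 0 := by
      intro h
      exact hchar ((CharP.cast_eq_zero_iff K (ringChar K) d).mp h)
    have hne : ((d : MvPolynomial (Fin 1) K) : MvPolynomial (Fin 1) K) ≠ 0 := by
      rw [← MvPolynomial.C_eq_coe_nat]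
      exact fun h => hdK (MvPolynomial.C_injective (Fin 1) K (h.trans (map_zero C).symm))
    exact hne hder
  constructor
  · intro hu
    obtain ⟨H, hH⟩ := hu.exists_right_inv
    have hHne : H ≠ 0 := fun h => by simp [h] at hH
    have h1 : homogeneousComponent (F.totalDegree + H.totalDegree) (F * H) ≠ 0 := by
      rw [top_mul F H]
      exact mul_ne_zero (top_ne_zero F hFne) (top_ne_zero H hHne)
    rw [hH] at h1
    refine h1 (homogeneousComponent_eq_zero _ 1 ?_)
    rw [totalDegree_one]
    omega
  · intro G H hGH
    by_contra hcon
    push_neg at hcon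
    obtain ⟨hnG, hnH⟩ := hcon
    have hdeg1 : ∀ P : MvPolynomial (Fin 2) K, ¬ IsUnit P → F = P * _root_.id P → True := fun _ _ _ => trivial
    have pos : ∀ P : MvPolynomial (Fin 2) K, P ≠ 0 → ¬ IsUnit P → 1 ≤ P.totalDegree := by
      intro P hPne hPu
      by_contra h
      have h0 : P.totalDegree = 0 := by omega
      have hPC : P = C (coeff 0 P) := by
        conv_lhs => rw [← sum_homogeneousComponent P]
        rw [h0]
        simp [homogeneousComponent_zero]
      have : coeff 0 P ≠ 0 := fun hz => hPne (by rw [hPC, hz, C_0])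
      exact hPu (by rw [hPC]; exact (Ne.isUnit this).map (C : K →+* MvPolynomial (Fin 2) K))
    have hGne : G ≠ 0 := fun h => hFne (by rw [hGH, h, zero_mul])
    have hHne : H ≠ 0 := fun h => hFne (by rw [hGH, h, mul_zero])
    exact key G H hGH (pos G hGne hnG) (pos H hHne hnH)

end SubShiftAux

/-- For a field `k`, a polynomial `f ∈ k[X]` of degree `d > 0` with the
characteristic of `k` not dividing `d`, and `a ∈ k` nonzero, the bivariate polynomial
`f(x) - f(y) + a` is absolutely irreducible, i.e. irreducible over the algebraic closure. -/
theorem sub_shift_absolutely_irreducible {k : Type*} [Field k]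
    (f : Polynomial k) (hd : 0 < f.natDegree) (hchar : ¬ (ringChar k ∣ f.natDegree))
    (a : k) (ha : a ≠ 0) :
    Irreducible
      (MvPolynomial.map (algebraMap k (AlgebraicClosure k))
        (Polynomial.aeval (MvPolynomial.X 0 : MvPolynomial (Fin 2) k) f
          - Polynomial.aeval (MvPolynomial.X 1 : MvPolynomial (Fin 2) k) f
          + MvPolynomial.C a)) := by
  set K := AlgebraicClosure k
  set φ := algebraMap k K with hφ
  have hinj : Function.Injective φ := φ.injective
  have h1 : (MvPolynomial.map (σ := Fin 2) φ).comp (algebraMap k (MvPolynomial (Fin 2) k)) =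
      (algebraMap K (MvPolynomial (Fin 2) K)).comp φ := by
    refine RingHom.ext fun r => ?_
    simp [MvPolynomial.algebraMap_eq, MvPolynomial.map_C]
  have hmapa : ∀ i : Fin 2,
      MvPolynomial.map φ (Polynomial.aeval (MvPolynomial.X i : MvPolynomial (Fin 2) k) f)
        = Polynomial.aeval (MvPolynomial.X i : MvPolynomial (Fin 2) K) (f.map φ) := by
    intro i
    rw [Polynomial.aeval_def, Polynomial.hom_eval₂, h1, MvPolynomial.map_X,
      ← Polynomial.eval₂_map, ← Polynomial.aeval_def]
  have hmain : MvPolynomial.map φ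
      (Polynomial.aeval (MvPolynomial.X 0 : MvPolynomial (Fin 2) k) f
        - Polynomial.aeval (MvPolynomial.X 1 : MvPolynomial (Fin 2) k) f
        + MvPolynomial.C a)
      = Polynomial.aeval (MvPolynomial.X 0 : MvPolynomial (Fin 2) K) (f.map φ)
        - Polynomial.aeval (MvPolynomial.X 1 : MvPolynomial (Fin 2) K) (f.map φ)
        + MvPolynomial.C (φ a) := by
    rw [map_add, map_sub, hmapa 0, hmapa 1, MvPolynomial.map_C]
  rw [hmain]
  have hndeg : (f.map φ).natDegree = f.natDegree :=
    Polynomial.natDegree_map_eq_of_injective hinj f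
  refine SubShiftAux.core (f.map φ) (by rw [hndeg]; exact hd) ?_ (φ a)
    (fun h => ha (hinj (h.trans (map_zero φ).symm)))
  rw [hndeg]
  haveI : CharP K (ringChar k) := charP_of_injective_algebraMap hinj (ringChar k)
  rw [ringChar.eq K (ringChar k)]
  exact hchar
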